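/- Let N ∈ ℕ and let h₁,…,h_N ∈ ℂ be window weights with Σ_n |h_n|² = 1. For all ω₁, ω₂ ∈ ℝ, the minimum over all (g₁,g₂) ∈ ℂ² with |g₁|² + |g₂|² = 1 of ‖g₁ x(ω₁) + g₂ x(ω₂)‖² equals 1 − |H(ω₁ − ω₂)|, where H(ω) = Σ_{n=1}^N |h_n|² e^{iω(n−(N+1)/2)}. That is, the squared smallest singular value of the matrix [x(ω₁) x(ω₂)] equals 1 − |H(ω₁−ω₂)|. -/

import Mathlib

open scoped BigOperators
open scoped ComplexConjugate

/-- `c_n = n − (N+1)/2` for `n = 1,…,N` (here `n : Fin N` is zero-based). -/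
noncomputable def cN (N : ℕ) (n : Fin N) : ℝ := ((n : ℝ) + 1) - ((N : ℝ) + 1) / 2

noncomputable def sinusoid {N : ℕ} (h : Fin N → ℂ) (ω : ℝ) : EuclideanSpace ℂ (Fin N) :=
  WithLp.toLp 2 fun n => h n * Complex.exp (Complex.I * (ω * cN N n))

noncomputable def Hfun {N : ℕ} (h : Fin N → ℂ) (ω : ℝ) : ℂ :=
  ∑ n, (‖h n‖ ^ 2 : ℂ) * Complex.exp (Complex.I * (ω * cN N n))

lemma inner_sinusoid {N : ℕ} (h : Fin N → ℂ) (ω₁ ω₂ : ℝ) :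
    (inner ℂ (sinusoid h ω₁) (sinusoid h ω₂) : ℂ) = Hfun h (ω₂ - ω₁) := by
  rw [PiLp.inner_apply]
  unfold sinusoid Hfun
  refine Finset.sum_congr rfl fun n _ => ?_
  simp only [RCLike.inner_apply, map_mul, ← Complex.exp_conj, map_mul, Complex.conj_I]
  rw [Complex.conj_ofReal, Complex.conj_ofReal]
  rw [mul_comm (h n * _)]
  rw [show (starRingEnd ℂ) (h n) * Complex.exp (-Complex.I * (↑ω₁ * ↑(cN N n))) *
      (h n * Complex.exp (Complex.I * (↑ω₂ * ↑(cN N n)))) =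
      ((starRingEnd ℂ) (h n) * h n) *
      (Complex.exp (-Complex.I * (↑ω₁ * ↑(cN N n)) + Complex.I * (↑ω₂ * ↑(cN N n)))) by
    rw [Complex.exp_add]; ring]
  rw [Complex.conj_mul']
  congr 1
  · congr 1; push_cast; ring

lemma Hfun_neg {N : ℕ} (h : Fin N → ℂ) (ω : ℝ) : Hfun h (-ω) = conj (Hfun h ω) := by
  unfold Hfun
  rw [map_sum]
  refine Finset.sum_congr rfl fun n _ => ?_
  rw [map_mul, ← Complex.exp_conj]
  simp [Complex.conj_ofReal, Complex.conj_I]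

lemma norm_Hfun_sub {N : ℕ} (h : Fin N → ℂ) (ω₁ ω₂ : ℝ) :
    ‖Hfun h (ω₂ - ω₁)‖ = ‖Hfun h (ω₁ - ω₂)‖ := by
  rw [show ω₂ - ω₁ = -(ω₁ - ω₂) by ring, Hfun_neg, RCLike.norm_conj]

lemma norm_sinusoid_sq {N : ℕ} (h : Fin N → ℂ) (hnorm : ∑ n, ‖h n‖ ^ 2 = 1) (ω : ℝ) :
    ‖sinusoid h ω‖ ^ 2 = 1 := by
  have key := inner_sinusoid h ω ω
  have h0 : Hfun h (ω - ω) = 1 := by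
    unfold Hfun
    simp only [sub_self]
    push_cast
    simp only [Complex.ofReal_zero, zero_mul, mul_zero, Complex.exp_zero, mul_one]
    norm_cast
  rw [h0] at key
  have h2 : RCLike.re (inner ℂ (sinusoid h ω) (sinusoid h ω) : ℂ) = ‖sinusoid h ω‖ ^ 2 :=
    inner_self_eq_norm_sq _
  rw [key] at h2
  simpa using h2.symm

lemma expand {N : ℕ} (h : Fin N → ℂ) (hnorm : ∑ n, ‖h n‖ ^ 2 = 1) (ω₁ ω₂ : ℝ)
    (g₁ g₂ : ℂ) (hg : ‖g₁‖ ^ 2 + ‖g₂‖ ^ 2 = 1) :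
    ‖g₁ • sinusoid h ω₁ + g₂ • sinusoid h ω₂‖ ^ 2 =
      1 + 2 * Complex.re (conj g₁ * g₂ * Hfun h (ω₂ - ω₁)) := by
  rw [@norm_add_sq ℂ]
  rw [inner_smul_left, inner_smul_right, inner_sinusoid]
  rw [norm_smul, norm_smul, mul_pow, mul_pow, norm_sinusoid_sq h hnorm,
    norm_sinusoid_sq h hnorm]
  rw [show (starRingEnd ℂ) g₁ * (g₂ * Hfun h (ω₂ - ω₁)) =
    conj g₁ * g₂ * Hfun h (ω₂ - ω₁) by ring]
  simp only [mul_one]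
  rw [show RCLike.re ((starRingEnd ℂ) g₁ * g₂ * Hfun h (ω₂ - ω₁)) =
    Complex.re ((starRingEnd ℂ) g₁ * g₂ * Hfun h (ω₂ - ω₁)) from rfl]
  linarith

/-- The squared smallest singular value of `[x(ω₁) x(ω₂)]` equals `1 − |H(ω₁ − ω₂)|`:
the minimum of `‖g₁ x(ω₁) + g₂ x(ω₂)‖²` over `(g₁,g₂) ∈ ℂ²` with `|g₁|² + |g₂|² = 1`. -/
theorem stmt9 {N : ℕ} (h : Fin N → ℂ) (hnorm : ∑ n, ‖h n‖ ^ 2 = 1) (ω₁ ω₂ : ℝ) :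
    IsLeast {t : ℝ | ∃ g₁ g₂ : ℂ, ‖g₁‖ ^ 2 + ‖g₂‖ ^ 2 = 1 ∧
        t = ‖g₁ • sinusoid h ω₁ + g₂ • sinusoid h ω₂‖ ^ 2}
      (1 - ‖Hfun h (ω₁ - ω₂)‖) := by
  set K : ℂ := Hfun h (ω₂ - ω₁) with hK
  have hKn : ‖K‖ = ‖Hfun h (ω₁ - ω₂)‖ := norm_Hfun_sub h ω₁ ω₂
  constructor
  · -- membership: exhibit minimizer
    by_cases hK0 : K = 0
    · refine ⟨1, 0, by norm_num, ?_⟩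
      rw [expand h hnorm ω₁ ω₂ 1 0 (by norm_num), ← hK, hK0]
      rw [← hKn, hK0]
      simp
    · set u : ℂ := conj K / ‖K‖ with hu
      have hKne : ‖K‖ ≠ 0 := norm_ne_zero_iff.mpr hK0
      have hun : ‖u‖ = 1 := by
        rw [hu, norm_div, RCLike.norm_conj, Complex.norm_real, Real.norm_eq_abs,
          abs_of_nonneg (norm_nonneg K), div_self hKne]
      set s : ℝ := (Real.sqrt 2)⁻¹ with hs
      have hs2 : s * s = 2⁻¹ := by
        rw [hs, ← mul_inv, Real.mul_self_sqrt (by norm_num)]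
      have hsnorm : ‖((s : ℝ) : ℂ)‖ ^ 2 = 2⁻¹ := by
        rw [Complex.norm_real, Real.norm_eq_abs, abs_of_nonneg (by positivity), sq, hs2]
      have hg : ‖((s : ℝ) : ℂ)‖ ^ 2 + ‖(-((s:ℝ):ℂ)) * u‖ ^ 2 = 1 := by
        rw [norm_mul, norm_neg, hun, mul_one, hsnorm]; norm_num
      refine ⟨((s : ℝ) : ℂ), (-((s:ℝ):ℂ)) * u, hg, ?_⟩
      rw [expand h hnorm ω₁ ω₂ _ _ hg, ← hK, ← hKn]
      have step1 : conj ((s:ℝ):ℂ) * ((-((s:ℝ):ℂ)) * u) * K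
          = -(((s:ℝ):ℂ) * ((s:ℝ):ℂ)) * (conj K * K / (‖K‖ : ℂ)) := by
        rw [Complex.conj_ofReal, hu]; ring
      have step2 : conj K * K / (‖K‖ : ℂ) = (‖K‖ : ℂ) := by
        rw [Complex.conj_mul']
        rw [sq]
        rw [mul_div_assoc, div_self (by exact_mod_cast hKne), mul_one]
      have hs2c : ((s:ℝ):ℂ) * ((s:ℝ):ℂ) = (2⁻¹ : ℂ) := by
        rw [← Complex.ofReal_mul, hs2]; norm_num
      have hre : conj ((s:ℝ):ℂ) * ((-((s:ℝ):ℂ)) * u) * K = ((-(‖K‖/2) : ℝ) : ℂ) := by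
        rw [step1, step2, hs2c]; push_cast; ring
      rw [hre]
      simp only [Complex.ofReal_re]
      ring
  · rintro t ⟨g₁, g₂, hg, rfl⟩
    rw [expand h hnorm ω₁ ω₂ g₁ g₂ hg, ← hK, ← hKn]
    have h1 : Complex.re (conj g₁ * g₂ * K) ≥ -‖conj g₁ * g₂ * K‖ := by
      have := Complex.abs_re_le_norm (conj g₁ * g₂ * K)
      cases abs_le.mp this with
      | intro a b => linarith
    have h2 : ‖conj g₁ * g₂ * K‖ = ‖g₁‖ * ‖g₂‖ * ‖K‖ := by
      rw [norm_mul, norm_mul, RCLike.norm_conj]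
    have h3 : ‖g₁‖ * ‖g₂‖ * ‖K‖ ≤ ‖K‖ / 2 := by
      have hab : 2 * (‖g₁‖ * ‖g₂‖) ≤ ‖g₁‖ ^ 2 + ‖g₂‖ ^ 2 := by nlinarith [sq_nonneg (‖g₁‖ - ‖g₂‖)]
      nlinarith [norm_nonneg K, norm_nonneg g₁, norm_nonneg g₂]
    linarith
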